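/- Let P = P_{(a,b)} \ P_{(a',b')} with a < a' < b' < b. Then the polyomino ideal I_P equals the kernel J_P of the monomial map φ(x_v) = r_{v₁}s_{v₂}t_{μ(v)}; in particular I_P is a prime ideal and K[P] = S/I_P is isomorphic to the toric ring K[r_{v₁}s_{v₂}t_{μ(v)} : v ∈ V(P)]. -/

import Mathlib

open MvPolynomial

/-- Componentwise strict inequality on lattice points of `ℕ²`. -/
def strictLt (u v : ℕ × ℕ) : Prop := u.1 < v.1 ∧ u.2 < v.2

/-- The vertex set of the polyomino `P = P_{(a,b)} \ P_{(a',b')}`: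
all lattice points of `[a,b]` except the interior vertices of `[a',b']`. -/
def vertexSet (a a' b' b : ℕ × ℕ) : Set (ℕ × ℕ) :=
  {v | a.1 ≤ v.1 ∧ v.1 ≤ b.1 ∧ a.2 ≤ v.2 ∧ v.2 ≤ b.2 ∧
       ¬(a'.1 < v.1 ∧ v.1 < b'.1 ∧ a'.2 < v.2 ∧ v.2 < b'.2)}

/-- The unit cell with lower-left corner `v` is a cell of the rectangle `[c,d]`. -/
def isCellOf (c d v : ℕ × ℕ) : Prop :=
  c.1 ≤ v.1 ∧ v.1 + 1 ≤ d.1 ∧ c.2 ≤ v.2 ∧ v.2 + 1 ≤ d.2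

/-- The unit cell with lower-left corner `v` is a cell of `P = P_{(a,b)} \ P_{(a',b')}`. -/
def isCellOfP (a a' b' b v : ℕ × ℕ) : Prop :=
  isCellOf a b v ∧ ¬ isCellOf a' b' v

/-- `[c,d]` is an inner interval of `P = P_{(a,b)} \ P_{(a',b')}`:
`c < d` componentwise and every unit cell inside `[c,d]` is a cell of `P`. -/
def isInnerInterval (a a' b' b c d : ℕ × ℕ) : Prop :=
  c.1 < d.1 ∧ c.2 < d.2 ∧ ∀ v : ℕ × ℕ, isCellOf c d v → isCellOfP a a' b' b v

/-- The labelling `μ : V(P) → ℤ` of the paper: `1` on the lower-left and upper-right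
corner rectangles, `2` on the upper-left and lower-right corner rectangles, and
increasing values anti-clockwise along the four strips around the removed rectangle. -/
def muLabel (a a' b' b v : ℕ × ℕ) : ℤ :=
  if a.1 ≤ v.1 ∧ v.1 ≤ a'.1 ∧ a.2 ≤ v.2 ∧ v.2 ≤ a'.2 then 1
  else if b'.1 ≤ v.1 ∧ v.1 ≤ b.1 ∧ b'.2 ≤ v.2 ∧ v.2 ≤ b.2 then 1
  else if a.1 ≤ v.1 ∧ v.1 ≤ a'.1 ∧ b'.2 ≤ v.2 ∧ v.2 ≤ b.2 then 2
  else if b'.1 ≤ v.1 ∧ v.1 ≤ b.1 ∧ a.2 ≤ v.2 ∧ v.2 ≤ a'.2 then 2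
  else if b'.1 ≤ v.1 ∧ v.1 ≤ b.1 ∧ a'.2 < v.2 ∧ v.2 < b'.2 then
    (v.2 : ℤ) - (a'.2 : ℤ) + ((b'.1 : ℤ) - (a'.1 : ℤ)) + 1
  else if a'.1 < v.1 ∧ v.1 < b'.1 ∧ b'.2 ≤ v.2 ∧ v.2 ≤ b.2 then
    (b'.1 : ℤ) - (v.1 : ℤ) + ((b'.1 : ℤ) - (a'.1 : ℤ)) + ((b'.2 : ℤ) - (a'.2 : ℤ))
  else if a.1 ≤ v.1 ∧ v.1 ≤ a'.1 ∧ a'.2 < v.2 ∧ v.2 < b'.2 then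
    (b'.2 : ℤ) - (v.2 : ℤ) + 2 * ((b'.1 : ℤ) - (a'.1 : ℤ)) + ((b'.2 : ℤ) - (a'.2 : ℤ)) - 1
  else if a'.1 < v.1 ∧ v.1 < b'.1 ∧ a.2 ≤ v.2 ∧ v.2 ≤ b'.2 then
    (v.1 : ℤ) - (a'.1 : ℤ) + 2
  else 0

/-- The monomial map `φ : K[x_v : v ∈ V(P)] → K[r,s,t]`, `x_v ↦ r_{v₁} s_{v₂} t_{μ(v)}`.
The target variables are indexed by `ℕ ⊕ ℕ ⊕ ℤ` (`r`-, `s`- and `t`-variables). -/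
noncomputable def phiMap (K : Type*) [Field K] (a a' b' b : ℕ × ℕ) :
    MvPolynomial (vertexSet a a' b' b) K →ₐ[K] MvPolynomial (ℕ ⊕ ℕ ⊕ ℤ) K :=
  aeval fun v => X (Sum.inl v.1.1) * X (Sum.inr (Sum.inl v.1.2)) *
    X (Sum.inr (Sum.inr (muLabel a a' b' b v.1)))

/-- The set of inner 2-minors of `P`. -/
def innerMinors (K : Type*) [Field K] (a a' b' b : ℕ × ℕ) :
    Set (MvPolynomial (vertexSet a a' b' b) K) :=
  {f | ∃ c d c' d' : vertexSet a a' b' b, isInnerInterval a a' b' b c.1 d.1 ∧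
    c'.1 = (c.1.1, d.1.2) ∧ d'.1 = (d.1.1, c.1.2) ∧
    f = X c * X d - X c' * X d'}

/-- The polyomino ideal `I_P`, generated by all inner 2-minors of `P`. -/
noncomputable def polyominoIdeal (K : Type*) [Field K] (a a' b' b : ℕ × ℕ) :
    Ideal (MvPolynomial (vertexSet a a' b' b) K) :=
  Ideal.span (innerMinors K a a' b' b)

namespace Stmt5
variable {a a' b' b : ℕ × ℕ}
structure Good (a a' b' b : ℕ × ℕ) : Prop where
  (h11 : a.1 < a'.1) (h12 : a.2 < a'.2)
  (h21 : a'.1 < b'.1) (h22 : a'.2 < b'.2)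
  (h31 : b'.1 < b.1) (h32 : b'.2 < b.2)

theorem good_of (h1 : strictLt a a') (h2 : strictLt a' b') (h3 : strictLt b' b) :
    Good a a' b' b := ⟨h1.1, h1.2, h2.1, h2.2, h3.1, h3.2⟩

theorem mem_vertexSet_iff {v : ℕ × ℕ} :
    v ∈ vertexSet a a' b' b ↔ (a.1 ≤ v.1 ∧ v.1 ≤ b.1 ∧ a.2 ≤ v.2 ∧ v.2 ≤ b.2 ∧
       ¬(a'.1 < v.1 ∧ v.1 < b'.1 ∧ a'.2 < v.2 ∧ v.2 < b'.2)) := Iff.rfl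

def MuSpec (a a' b' b : ℕ × ℕ) (u : ℕ × ℕ) (m : ℤ) : Prop :=
    (u.1 ≤ a'.1 ∧ u.2 ≤ a'.2 ∧ m = 1) ∨
    (b'.1 ≤ u.1 ∧ b'.2 ≤ u.2 ∧ m = 1) ∨
    (u.1 ≤ a'.1 ∧ b'.2 ≤ u.2 ∧ m = 2) ∨
    (b'.1 ≤ u.1 ∧ u.2 ≤ a'.2 ∧ m = 2) ∨
    (b'.1 ≤ u.1 ∧ a'.2 < u.2 ∧ u.2 < b'.2 ∧
      m = (u.2 : ℤ) - a'.2 + ((b'.1 : ℤ) - a'.1) + 1) ∨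
    (a'.1 < u.1 ∧ u.1 < b'.1 ∧ b'.2 ≤ u.2 ∧
      m = (b'.1 : ℤ) - u.1 + ((b'.1 : ℤ) - a'.1) + ((b'.2 : ℤ) - a'.2)) ∨
    (u.1 ≤ a'.1 ∧ a'.2 < u.2 ∧ u.2 < b'.2 ∧
      m = (b'.2 : ℤ) - u.2 + 2 * ((b'.1 : ℤ) - a'.1) + ((b'.2 : ℤ) - a'.2) - 1) ∨
    (a'.1 < u.1 ∧ u.1 < b'.1 ∧ u.2 ≤ a'.2 ∧
      m = (u.1 : ℤ) - a'.1 + 2)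

theorem mu_spec (hg : Good a a' b' b) {u : ℕ × ℕ} (hu : u ∈ vertexSet a a' b' b) :
    MuSpec a a' b' b u (muLabel a a' b' b u) := by
  obtain ⟨g1,g2,g3,g4,g5,g6⟩ := hg
  rw [mem_vertexSet_iff] at hu
  have hreg : (u.1 ≤ a'.1 ∧ u.2 ≤ a'.2) ∨ (b'.1 ≤ u.1 ∧ b'.2 ≤ u.2) ∨
      (u.1 ≤ a'.1 ∧ b'.2 ≤ u.2) ∨ (b'.1 ≤ u.1 ∧ u.2 ≤ a'.2) ∨
      (b'.1 ≤ u.1 ∧ a'.2 < u.2 ∧ u.2 < b'.2) ∨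
      (a'.1 < u.1 ∧ u.1 < b'.1 ∧ b'.2 ≤ u.2) ∨
      (u.1 ≤ a'.1 ∧ a'.2 < u.2 ∧ u.2 < b'.2) ∨
      (a'.1 < u.1 ∧ u.1 < b'.1 ∧ u.2 ≤ a'.2) := by omega
  unfold MuSpec
  rcases hreg with h|h|h|h|h|h|h|h
  · have : muLabel a a' b' b u = 1 := by
      rw [muLabel, if_pos (by omega : a.1 ≤ u.1 ∧ u.1 ≤ a'.1 ∧ a.2 ≤ u.2 ∧ u.2 ≤ a'.2)]
    omega
  · have : muLabel a a' b' b u = 1 := by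
      rw [muLabel, if_neg (by omega), if_pos (by omega : b'.1 ≤ u.1 ∧ u.1 ≤ b.1 ∧ b'.2 ≤ u.2 ∧ u.2 ≤ b.2)]
    omega
  · have : muLabel a a' b' b u = 2 := by
      rw [muLabel, if_neg (by omega), if_neg (by omega),
        if_pos (by omega : a.1 ≤ u.1 ∧ u.1 ≤ a'.1 ∧ b'.2 ≤ u.2 ∧ u.2 ≤ b.2)]
    omega
  · have : muLabel a a' b' b u = 2 := by
      rw [muLabel, if_neg (by omega), if_neg (by omega), if_neg (by omega),
        if_pos (by omega : b'.1 ≤ u.1 ∧ u.1 ≤ b.1 ∧ a.2 ≤ u.2 ∧ u.2 ≤ a'.2)]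
    omega
  · have : muLabel a a' b' b u = (u.2 : ℤ) - a'.2 + ((b'.1 : ℤ) - a'.1) + 1 := by
      rw [muLabel, if_neg (by omega), if_neg (by omega), if_neg (by omega), if_neg (by omega),
        if_pos (by omega : b'.1 ≤ u.1 ∧ u.1 ≤ b.1 ∧ a'.2 < u.2 ∧ u.2 < b'.2)]
    omega
  · have : muLabel a a' b' b u
        = (b'.1 : ℤ) - u.1 + ((b'.1 : ℤ) - a'.1) + ((b'.2 : ℤ) - a'.2) := by
      rw [muLabel, if_neg (by omega), if_neg (by omega), if_neg (by omega), if_neg (by omega),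
        if_neg (by omega), if_pos (by omega : a'.1 < u.1 ∧ u.1 < b'.1 ∧ b'.2 ≤ u.2 ∧ u.2 ≤ b.2)]
    omega
  · have : muLabel a a' b' b u
        = (b'.2 : ℤ) - u.2 + 2 * ((b'.1 : ℤ) - a'.1) + ((b'.2 : ℤ) - a'.2) - 1 := by
      rw [muLabel, if_neg (by omega), if_neg (by omega), if_neg (by omega), if_neg (by omega),
        if_neg (by omega), if_neg (by omega),
        if_pos (by omega : a.1 ≤ u.1 ∧ u.1 ≤ a'.1 ∧ a'.2 < u.2 ∧ u.2 < b'.2)]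
    omega
  · have : muLabel a a' b' b u = (u.1 : ℤ) - a'.1 + 2 := by
      rw [muLabel, if_neg (by omega), if_neg (by omega), if_neg (by omega), if_neg (by omega),
        if_neg (by omega), if_neg (by omega), if_neg (by omega),
        if_pos (by omega : a'.1 < u.1 ∧ u.1 < b'.1 ∧ a.2 ≤ u.2 ∧ u.2 ≤ b'.2)]
    omega

theorem mu_left (hg : Good a a' b' b) {x1 x2 y : ℕ}
    (m1 : (x1, y) ∈ vertexSet a a' b' b) (m2 : (x2, y) ∈ vertexSet a a' b' b)
    (hx1' : x1 ≤ a'.1) (hx2' : x2 ≤ a'.1) :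
    muLabel a a' b' b (x1, y) = muLabel a a' b' b (x2, y) := by
  have s1 := mu_spec hg m1
  have s2 := mu_spec hg m2
  obtain ⟨g1,g2,g3,g4,g5,g6⟩ := hg
  unfold MuSpec at s1 s2
  simp only at s1 s2
  omega
theorem mu_right (hg : Good a a' b' b) {x1 x2 y : ℕ}
    (m1 : (x1, y) ∈ vertexSet a a' b' b) (m2 : (x2, y) ∈ vertexSet a a' b' b)
    (hx1' : b'.1 ≤ x1) (hx2' : b'.1 ≤ x2) :
    muLabel a a' b' b (x1, y) = muLabel a a' b' b (x2, y) := by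
  have s1 := mu_spec hg m1
  have s2 := mu_spec hg m2
  obtain ⟨g1,g2,g3,g4,g5,g6⟩ := hg
  unfold MuSpec at s1 s2
  simp only at s1 s2
  omega

theorem mu_bottom (hg : Good a a' b' b) {x y1 y2 : ℕ}
    (m1 : (x, y1) ∈ vertexSet a a' b' b) (m2 : (x, y2) ∈ vertexSet a a' b' b)
    (hy1' : y1 ≤ a'.2) (hy2' : y2 ≤ a'.2) :
    muLabel a a' b' b (x, y1) = muLabel a a' b' b (x, y2) := by
  have s1 := mu_spec hg m1
  have s2 := mu_spec hg m2
  obtain ⟨g1,g2,g3,g4,g5,g6⟩ := hg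
  unfold MuSpec at s1 s2
  simp only at s1 s2
  omega

theorem mu_top (hg : Good a a' b' b) {x y1 y2 : ℕ}
    (m1 : (x, y1) ∈ vertexSet a a' b' b) (m2 : (x, y2) ∈ vertexSet a a' b' b)
    (hy1' : b'.2 ≤ y1) (hy2' : b'.2 ≤ y2) :
    muLabel a a' b' b (x, y1) = muLabel a a' b' b (x, y2) := by
  have s1 := mu_spec hg m1
  have s2 := mu_spec hg m2
  obtain ⟨g1,g2,g3,g4,g5,g6⟩ := hg
  unfold MuSpec at s1 s2
  simp only at s1 s2
  omega

theorem cross_mem (hg : Good a a' b' b) {v w : ℕ × ℕ}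
    (hv : v ∈ vertexSet a a' b' b) (hw : w ∈ vertexSet a a' b' b)
    (h : v.1 ≤ a'.1 ∨ b'.1 ≤ v.1 ∨ w.2 ≤ a'.2 ∨ b'.2 ≤ w.2) :
    (v.1, w.2) ∈ vertexSet a a' b' b := by
  rw [mem_vertexSet_iff] at *
  simp only at *
  omega

theorem innerInterval_of (hg : Good a a' b' b) {c d : ℕ × ℕ}
    (hac1 : a.1 ≤ c.1) (hac2 : a.2 ≤ c.2) (hdb1 : d.1 ≤ b.1) (hdb2 : d.2 ≤ b.2)
    (hcd1 : c.1 < d.1) (hcd2 : c.2 < d.2)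
    (hav : d.1 ≤ a'.1 ∨ b'.1 ≤ c.1 ∨ d.2 ≤ a'.2 ∨ b'.2 ≤ c.2) :
    isInnerInterval a a' b' b c d := by
  refine ⟨hcd1, hcd2, fun v hv => ?_⟩
  unfold isCellOf at hv
  unfold isCellOfP isCellOf
  omega

theorem innerInterval_struct (hg : Good a a' b' b) {c d : ℕ × ℕ}
    (h : isInnerInterval a a' b' b c d) :
    a.1 ≤ c.1 ∧ a.2 ≤ c.2 ∧ d.1 ≤ b.1 ∧ d.2 ≤ b.2 ∧ c.1 < d.1 ∧ c.2 < d.2 ∧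
      (d.1 ≤ a'.1 ∨ b'.1 ≤ c.1 ∨ d.2 ≤ a'.2 ∨ b'.2 ≤ c.2) := by
  obtain ⟨g1,g2,g3,g4,g5,g6⟩ := hg
  obtain ⟨hc1, hc2, hcell⟩ := h
  have H1 := hcell (c.1, c.2) (by unfold isCellOf; omega)
  have H2 := hcell (d.1 - 1, d.2 - 1) (by unfold isCellOf; omega)
  unfold isCellOfP isCellOf at H1 H2
  refine ⟨by omega, by omega, by omega, by omega, hc1, hc2, ?_⟩
  by_contra hav
  push_neg at hav
  obtain ⟨k1, k2, k3, k4⟩ := hav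
  rcases Nat.le_total c.1 a'.1 with h1' | h1' <;> rcases Nat.le_total c.2 a'.2 with h2' | h2'
  · have H3 := hcell (a'.1, a'.2) (by unfold isCellOf; omega)
    unfold isCellOfP isCellOf at H3
    omega
  · have H3 := hcell (a'.1, c.2) (by unfold isCellOf; omega)
    unfold isCellOfP isCellOf at H3
    omega
  · have H3 := hcell (c.1, a'.2) (by unfold isCellOf; omega)
    unfold isCellOfP isCellOf at H3
    omega
  · have H3 := hcell (c.1, c.2) (by unfold isCellOf; omega)
    unfold isCellOfP isCellOf at H3
    omega

section Alg
variable (K : Type*) [Field K]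

theorem minor_mem (c d c' d' : vertexSet a a' b' b) (hin : isInnerInterval a a' b' b c.1 d.1)
    (hc' : c'.1 = (c.1.1, d.1.2)) (hd' : d'.1 = (d.1.1, c.1.2)) :
    (X c * X d - X c' * X d' : MvPolynomial (vertexSet a a' b' b) K)
      ∈ polyominoIdeal K a a' b' b :=
  Ideal.subset_span ⟨c, d, c', d', hin, hc', hd', rfl⟩

/-- The monomial attached to a multiset of vertices. -/
noncomputable def mon (M : Multiset (vertexSet a a' b' b)) :
    MvPolynomial (vertexSet a a' b' b) K := (M.map X).prod

theorem mon_zero : mon K (0 : Multiset (vertexSet a a' b' b)) = 1 := rfl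

theorem mon_cons (v : vertexSet a a' b' b) (M : Multiset (vertexSet a a' b' b)) :
    mon K (v ::ₘ M) = X v * mon K M := by
  simp [mon]

/-- Congruence modulo the polyomino ideal. -/
def Rel (M N : Multiset (vertexSet a a' b' b)) : Prop :=
  mon K M - mon K N ∈ polyominoIdeal K a a' b' b

theorem Rel.refl (M : Multiset (vertexSet a a' b' b)) : Rel K M M := by
  unfold Rel; simp

theorem rel_of_eq {M N : Multiset (vertexSet a a' b' b)} (h : M = N) : Rel K M N := by
  subst h; exact Rel.refl K M

theorem Rel.symm {M N : Multiset (vertexSet a a' b' b)} (h : Rel K M N) : Rel K N M := by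
  unfold Rel at *
  have := (polyominoIdeal K a a' b' b).neg_mem h
  simpa using this

theorem Rel.trans {M N P : Multiset (vertexSet a a' b' b)} (h : Rel K M N)
    (h' : Rel K N P) : Rel K M P := by
  unfold Rel at *
  have := (polyominoIdeal K a a' b' b).add_mem h h'
  simpa using this

theorem Rel.cons {M N : Multiset (vertexSet a a' b' b)} (v : vertexSet a a' b' b)
    (h : Rel K M N) : Rel K (v ::ₘ M) (v ::ₘ N) := by
  unfold Rel at *
  rw [mon_cons, mon_cons, ← mul_sub]
  exact Ideal.mul_mem_left _ _ h

theorem rel_swap (hg : Good a a' b' b) (v w : vertexSet a a' b' b)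
    (M : Multiset (vertexSet a a' b' b))
    (hm1 : (v.1.1, w.1.2) ∈ vertexSet a a' b' b) (hm2 : (w.1.1, v.1.2) ∈ vertexSet a a' b' b)
    (hav : (v.1.1 ≤ a'.1 ∧ w.1.1 ≤ a'.1) ∨ (b'.1 ≤ v.1.1 ∧ b'.1 ≤ w.1.1) ∨
      (v.1.2 ≤ a'.2 ∧ w.1.2 ≤ a'.2) ∨ (b'.2 ≤ v.1.2 ∧ b'.2 ≤ w.1.2)) :
    Rel K (v ::ₘ w ::ₘ M) (⟨(v.1.1, w.1.2), hm1⟩ ::ₘ ⟨(w.1.1, v.1.2), hm2⟩ ::ₘ M) := by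
  have hv := v.2
  have hw := w.2
  rw [mem_vertexSet_iff] at hv hw
  by_cases hx : v.1.1 = w.1.1
  · have e1 : (⟨(v.1.1, w.1.2), hm1⟩ : vertexSet a a' b' b) = w :=
      Subtype.ext (Prod.ext hx rfl)
    have e2 : (⟨(w.1.1, v.1.2), hm2⟩ : vertexSet a a' b' b) = v :=
      Subtype.ext (Prod.ext hx.symm rfl)
    rw [e1, e2]
    exact rel_of_eq K (Multiset.cons_swap v w M)
  by_cases hy : v.1.2 = w.1.2
  · have e1 : (⟨(v.1.1, w.1.2), hm1⟩ : vertexSet a a' b' b) = v :=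
      Subtype.ext (Prod.ext rfl hy.symm)
    have e2 : (⟨(w.1.1, v.1.2), hm2⟩ : vertexSet a a' b' b) = w :=
      Subtype.ext (Prod.ext rfl hy)
    rw [e1, e2]
    exact rel_of_eq K rfl
  -- nondegenerate case
  set v' : vertexSet a a' b' b := ⟨(v.1.1, w.1.2), hm1⟩ with hv'
  set w' : vertexSet a a' b' b := ⟨(w.1.1, v.1.2), hm2⟩ with hw'
  have ev1 : v'.1.1 = v.1.1 := rfl
  have ev2 : v'.1.2 = w.1.2 := rfl
  have ew1 : w'.1.1 = w.1.1 := rfl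
  have ew2 : w'.1.2 = v.1.2 := rfl
  suffices h : (X v * X w - X v' * X w' : MvPolynomial (vertexSet a a' b' b) K)
      ∈ polyominoIdeal K a a' b' b by
    unfold Rel
    have e : mon K (v ::ₘ w ::ₘ M) - mon K (v' ::ₘ w' ::ₘ M)
        = (X v * X w - X v' * X w') * mon K M := by
      rw [mon_cons, mon_cons, mon_cons, mon_cons]; ring
    rw [e]
    exact Ideal.mul_mem_right _ _ h
  rcases Nat.lt_or_ge v.1.1 w.1.1 with hx1 | hx1
  · rcases Nat.lt_or_ge v.1.2 w.1.2 with hy1 | hy1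
    · -- v is lower-left, w is upper-right
      refine minor_mem K v w v' w' ?_ rfl rfl
      exact innerInterval_of hg (by omega) (by omega) (by omega) (by omega) hx1 hy1 (by omega)
    · -- v' lower-left, w' upper-right; minor gives the negated binomial
      have hy1' : w.1.2 < v.1.2 := by omega
      have h := minor_mem K v' w' v w ?_ rfl rfl
      · have e : (X v * X w - X v' * X w' : MvPolynomial (vertexSet a a' b' b) K)
            = -(X v' * X w' - X v * X w) := by ring
        rw [e]
        exact (polyominoIdeal K a a' b' b).neg_mem h
      · exact innerInterval_of hg (by omega) (by omega) (by omega) (by omega) hx1 hy1' (by omega)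
  · have hx1' : w.1.1 < v.1.1 := by omega
    rcases Nat.lt_or_ge v.1.2 w.1.2 with hy1 | hy1
    · -- w' = (w.1.1, v.1.2) lower-left, v' upper-right
      have h := minor_mem K w' v' w v ?_ rfl rfl
      · have e : (X v * X w - X v' * X w' : MvPolynomial (vertexSet a a' b' b) K)
            = -(X w' * X v' - X w * X v) := by ring
        rw [e]
        exact (polyominoIdeal K a a' b' b).neg_mem h
      · exact innerInterval_of hg (by omega) (by omega) (by omega) (by omega) hx1' hy1 (by omega)
    · -- w lower-left, v upper-right
      have hy1' : w.1.2 < v.1.2 := by omega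
      have h := minor_mem K w v w' v' ?_ rfl rfl
      · have e : (X v * X w - X v' * X w' : MvPolynomial (vertexSet a a' b' b) K)
            = X w * X v - X w' * X v' := by ring
        rw [e]
        exact h
      · exact innerInterval_of hg (by omega) (by omega) (by omega) (by omega) hx1' hy1' (by omega)

end Alg

/-- first coordinates -/
def Xs (M : Multiset (vertexSet a a' b' b)) : Multiset ℕ := M.map fun v => v.1.1
/-- second coordinates -/
def Ys (M : Multiset (vertexSet a a' b' b)) : Multiset ℕ := M.map fun v => v.1.2
/-- labels -/
def Ms (M : Multiset (vertexSet a a' b' b)) : Multiset ℤ :=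
  M.map fun v => muLabel a a' b' b v.1

section Reach
variable (K : Type*) [Field K]

theorem reach_cross (hg : Good a a' b' b) {T : Multiset (vertexSet a a' b' b)}
    {q r : vertexSet a a' b' b} (hq : q ∈ T) (hr : r ∈ T)
    (hside : (q.1.2 ≤ a'.2 ∧ r.1.2 ≤ a'.2) ∨ (b'.2 ≤ q.1.2 ∧ b'.2 ≤ r.1.2) ∨
      (q.1.1 ≤ a'.1 ∧ r.1.1 ≤ a'.1) ∨ (b'.1 ≤ q.1.1 ∧ b'.1 ≤ r.1.1)) :
    ∃ (T' : Multiset (vertexSet a a' b' b)) (hm : (q.1.1, r.1.2) ∈ vertexSet a a' b' b),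
      Rel K T T' ∧ Xs T' = Xs T ∧ Ys T' = Ys T ∧ Ms T' = Ms T ∧
        (⟨(q.1.1, r.1.2), hm⟩ : vertexSet a a' b' b) ∈ T' := by
  have hm : (q.1.1, r.1.2) ∈ vertexSet a a' b' b := by
    refine cross_mem hg q.2 r.2 ?_
    rcases hside with ⟨u1,u2⟩|⟨u1,u2⟩|⟨u1,u2⟩|⟨u1,u2⟩
    · exact Or.inr (Or.inr (Or.inl u2))
    · exact Or.inr (Or.inr (Or.inr u2))
    · exact Or.inl u1
    · exact Or.inr (Or.inl u1)
  by_cases hx : q.1.1 = r.1.1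
  · refine ⟨T, hm, Rel.refl K T, rfl, rfl, rfl, ?_⟩
    have e : (⟨(q.1.1, r.1.2), hm⟩ : vertexSet a a' b' b) = r :=
      Subtype.ext (Prod.ext hx rfl)
    rw [e]; exact hr
  by_cases hy : q.1.2 = r.1.2
  · refine ⟨T, hm, Rel.refl K T, rfl, rfl, rfl, ?_⟩
    have e : (⟨(q.1.1, r.1.2), hm⟩ : vertexSet a a' b' b) = q :=
      Subtype.ext (Prod.ext rfl hy.symm)
    rw [e]; exact hq
  -- genuine swap
  have hm2 : (r.1.1, q.1.2) ∈ vertexSet a a' b' b := by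
    refine cross_mem hg r.2 q.2 ?_
    rcases hside with ⟨u1,u2⟩|⟨u1,u2⟩|⟨u1,u2⟩|⟨u1,u2⟩
    · exact Or.inr (Or.inr (Or.inl u1))
    · exact Or.inr (Or.inr (Or.inr u1))
    · exact Or.inl u2
    · exact Or.inr (Or.inl u2)
  have hne : r ≠ q := fun h => hy (by rw [h])
  have hr' : r ∈ T.erase q := (Multiset.mem_erase_of_ne hne).mpr hr
  obtain ⟨R, hT⟩ : ∃ R, q ::ₘ r ::ₘ R = T :=
    ⟨(T.erase q).erase r, by rw [Multiset.cons_erase hr', Multiset.cons_erase hq]⟩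
  have hav : (q.1.1 ≤ a'.1 ∧ r.1.1 ≤ a'.1) ∨ (b'.1 ≤ q.1.1 ∧ b'.1 ≤ r.1.1) ∨
      (q.1.2 ≤ a'.2 ∧ r.1.2 ≤ a'.2) ∨ (b'.2 ≤ q.1.2 ∧ b'.2 ≤ r.1.2) := by tauto
  have hrel : Rel K T ((⟨(q.1.1, r.1.2), hm⟩ : vertexSet a a' b' b) ::ₘ
      (⟨(r.1.1, q.1.2), hm2⟩ : vertexSet a a' b' b) ::ₘ R) := by
    rw [← hT]
    exact rel_swap K hg q r _ hm hm2 hav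
  have e1 : muLabel a a' b' b (q.1.1, r.1.2) = muLabel a a' b' b q.1 ∧
      muLabel a a' b' b (r.1.1, q.1.2) = muLabel a a' b' b r.1 ∨
        muLabel a a' b' b (q.1.1, r.1.2) = muLabel a a' b' b r.1 ∧
      muLabel a a' b' b (r.1.1, q.1.2) = muLabel a a' b' b q.1 := by
    rcases hside with ⟨u1,u2⟩|⟨u1,u2⟩|⟨u1,u2⟩|⟨u1,u2⟩
    · exact Or.inl ⟨mu_bottom hg hm q.2 u2 u1, mu_bottom hg hm2 r.2 u1 u2⟩
    · exact Or.inl ⟨mu_top hg hm q.2 u2 u1, mu_top hg hm2 r.2 u1 u2⟩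
    · exact Or.inr ⟨mu_left hg hm r.2 u1 u2, mu_left hg hm2 q.2 u2 u1⟩
    · exact Or.inr ⟨mu_right hg hm r.2 u1 u2, mu_right hg hm2 q.2 u2 u1⟩
  refine ⟨_, hm, hrel, ?_, ?_, ?_, Multiset.mem_cons_self _ _⟩
  · rw [← hT]
    unfold Xs
    simp only [Multiset.map_cons]
  · rw [← hT]
    unfold Ys
    simp only [Multiset.map_cons]
    exact Multiset.cons_swap _ _ _
  · rw [← hT]
    unfold Ms
    simp only [Multiset.map_cons]
    rcases e1 with ⟨f1, f2⟩ | ⟨f1, f2⟩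
    · rw [show muLabel a a' b' b (⟨(q.1.1, r.1.2), hm⟩ : vertexSet a a' b' b).1
          = muLabel a a' b' b q.1 from f1,
        show muLabel a a' b' b (⟨(r.1.1, q.1.2), hm2⟩ : vertexSet a a' b' b).1
          = muLabel a a' b' b r.1 from f2]
    · rw [show muLabel a a' b' b (⟨(q.1.1, r.1.2), hm⟩ : vertexSet a a' b' b).1
          = muLabel a a' b' b r.1 from f1,
        show muLabel a a' b' b (⟨(r.1.1, q.1.2), hm2⟩ : vertexSet a a' b' b).1
          = muLabel a a' b' b q.1 from f2]
      exact Multiset.cons_swap _ _ _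

theorem countP_Xs (p : ℕ → Prop) [DecidablePred p] (T : Multiset (vertexSet a a' b' b)) :
    (Xs T).countP p = T.countP fun u => p u.1.1 := by
  rw [Xs, Multiset.countP_map, ← Multiset.countP_eq_card_filter]

theorem countP_Ys (p : ℕ → Prop) [DecidablePred p] (T : Multiset (vertexSet a a' b' b)) :
    (Ys T).countP p = T.countP fun u => p u.1.2 := by
  rw [Ys, Multiset.countP_map, ← Multiset.countP_eq_card_filter]

theorem countP_Ms (p : ℤ → Prop) [DecidablePred p] (T : Multiset (vertexSet a a' b' b)) :
    (Ms T).countP p = T.countP fun u => p (muLabel a a' b' b u.1) := by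
  rw [Ms, Multiset.countP_map, ← Multiset.countP_eq_card_filter]

theorem ccLL (hg : Good a a' b' b) {T : Multiset (vertexSet a a' b' b)} :
    (∀ u ∈ T, muLabel a a' b' b u.1 = 1 ∨ muLabel a a' b' b u.1 = 2) →
    (T.countP fun u => u.1.1 ≤ a'.1) + (T.countP fun u => u.1.2 ≤ a'.2)
      = 2 * (T.countP fun u => u.1.1 ≤ a'.1 ∧ u.1.2 ≤ a'.2)
        + (T.countP fun u => muLabel a a' b' b u.1 = 2) := by
  refine Multiset.induction_on T (by simp) fun v s ih hc => ?_
  have h1 := hc v (Multiset.mem_cons_self v s)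
  have hs := ih fun u hu => hc u (Multiset.mem_cons_of_mem hu)
  have sp := mu_spec hg v.2
  obtain ⟨g1,g2,g3,g4,g5,g6⟩ := hg
  unfold MuSpec at sp
  simp only [Multiset.countP_cons]
  split_ifs <;> omega

theorem ccUL (hg : Good a a' b' b) {T : Multiset (vertexSet a a' b' b)} :
    (∀ u ∈ T, muLabel a a' b' b u.1 = 1 ∨ muLabel a a' b' b u.1 = 2) →
    (T.countP fun u => u.1.1 ≤ a'.1) + (T.countP fun u => b'.2 ≤ u.1.2)
      = 2 * (T.countP fun u => u.1.1 ≤ a'.1 ∧ b'.2 ≤ u.1.2)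
        + (T.countP fun u => muLabel a a' b' b u.1 = 1) := by
  refine Multiset.induction_on T (by simp) fun v s ih hc => ?_
  have h1 := hc v (Multiset.mem_cons_self v s)
  have hs := ih fun u hu => hc u (Multiset.mem_cons_of_mem hu)
  have sp := mu_spec hg v.2
  obtain ⟨g1,g2,g3,g4,g5,g6⟩ := hg
  unfold MuSpec at sp
  simp only [Multiset.countP_cons]
  split_ifs <;> omega

theorem ccLR (hg : Good a a' b' b) {T : Multiset (vertexSet a a' b' b)} :
    (∀ u ∈ T, muLabel a a' b' b u.1 = 1 ∨ muLabel a a' b' b u.1 = 2) →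
    (T.countP fun u => b'.1 ≤ u.1.1) + (T.countP fun u => u.1.2 ≤ a'.2)
      = 2 * (T.countP fun u => b'.1 ≤ u.1.1 ∧ u.1.2 ≤ a'.2)
        + (T.countP fun u => muLabel a a' b' b u.1 = 1) := by
  refine Multiset.induction_on T (by simp) fun v s ih hc => ?_
  have h1 := hc v (Multiset.mem_cons_self v s)
  have hs := ih fun u hu => hc u (Multiset.mem_cons_of_mem hu)
  have sp := mu_spec hg v.2
  obtain ⟨g1,g2,g3,g4,g5,g6⟩ := hg
  unfold MuSpec at sp
  simp only [Multiset.countP_cons]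
  split_ifs <;> omega

theorem ccUR (hg : Good a a' b' b) {T : Multiset (vertexSet a a' b' b)} :
    (∀ u ∈ T, muLabel a a' b' b u.1 = 1 ∨ muLabel a a' b' b u.1 = 2) →
    (T.countP fun u => b'.1 ≤ u.1.1) + (T.countP fun u => b'.2 ≤ u.1.2)
      = 2 * (T.countP fun u => b'.1 ≤ u.1.1 ∧ b'.2 ≤ u.1.2)
        + (T.countP fun u => muLabel a a' b' b u.1 = 2) := by
  refine Multiset.induction_on T (by simp) fun v s ih hc => ?_
  have h1 := hc v (Multiset.mem_cons_self v s)
  have hs := ih fun u hu => hc u (Multiset.mem_cons_of_mem hu)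
  have sp := mu_spec hg v.2
  obtain ⟨g1,g2,g3,g4,g5,g6⟩ := hg
  unfold MuSpec at sp
  simp only [Multiset.countP_cons]
  split_ifs <;> omega

theorem corner_reach (hg : Good a a' b' b) {N : Multiset (vertexSet a a' b' b)} {x y : ℕ}
    (hp : ∃ p ∈ N, p.1.1 = x) (hr : ∃ r ∈ N, r.1.2 = y)
    (hw : ∃ w ∈ N, ((x ≤ a'.1 ∧ w.1.1 ≤ a'.1) ∨ (b'.1 ≤ x ∧ b'.1 ≤ w.1.1)) ∧
      ((y ≤ a'.2 ∧ w.1.2 ≤ a'.2) ∨ (b'.2 ≤ y ∧ b'.2 ≤ w.1.2))) :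
    ∃ (T' : Multiset (vertexSet a a' b' b)) (hm : (x, y) ∈ vertexSet a a' b' b),
      Rel K N T' ∧ Xs T' = Xs N ∧ Ys T' = Ys N ∧ Ms T' = Ms N ∧
        (⟨(x, y), hm⟩ : vertexSet a a' b' b) ∈ T' := by
  obtain ⟨p, hpN, hpx⟩ := hp
  obtain ⟨w, hwN, hwx, hwy⟩ := hw
  -- step 1 : swap x into a vertex of the same y-class as y
  have hside1 : (p.1.2 ≤ a'.2 ∧ w.1.2 ≤ a'.2) ∨ (b'.2 ≤ p.1.2 ∧ b'.2 ≤ w.1.2) ∨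
      (p.1.1 ≤ a'.1 ∧ w.1.1 ≤ a'.1) ∨ (b'.1 ≤ p.1.1 ∧ b'.1 ≤ w.1.1) := by
    rcases hwx with ⟨u1, u2⟩ | ⟨u1, u2⟩
    · exact Or.inr (Or.inr (Or.inl ⟨by omega, u2⟩))
    · exact Or.inr (Or.inr (Or.inr ⟨by omega, u2⟩))
  obtain ⟨T1, hm1, rel1, ex1, ey1, em1, hmem1⟩ := reach_cross K hg hpN hwN hside1
  -- y-carrier inside T1
  obtain ⟨r, hrN, hry⟩ := hr
  have hyT1 : y ∈ Ys T1 := by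
    rw [ey1]
    exact Multiset.mem_map.mpr ⟨r, hrN, hry⟩
  obtain ⟨r1, hr1T, hr1y⟩ := Multiset.mem_map.mp hyT1
  -- step 2 : swap y in
  have hside2 : ((⟨(p.1.1, w.1.2), hm1⟩ : vertexSet a a' b' b).1.2 ≤ a'.2 ∧ r1.1.2 ≤ a'.2) ∨
      (b'.2 ≤ (⟨(p.1.1, w.1.2), hm1⟩ : vertexSet a a' b' b).1.2 ∧ b'.2 ≤ r1.1.2) ∨
      ((⟨(p.1.1, w.1.2), hm1⟩ : vertexSet a a' b' b).1.1 ≤ a'.1 ∧ r1.1.1 ≤ a'.1) ∨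
      (b'.1 ≤ (⟨(p.1.1, w.1.2), hm1⟩ : vertexSet a a' b' b).1.1 ∧ b'.1 ≤ r1.1.1) := by
    simp only
    rcases hwy with ⟨u1, u2⟩ | ⟨u1, u2⟩
    · exact Or.inl ⟨u2, by omega⟩
    · exact Or.inr (Or.inl ⟨u2, by omega⟩)
  obtain ⟨T2, hm2, rel2, ex2, ey2, em2, hmem2⟩ := reach_cross K hg hmem1 hr1T hside2
  have hfin : ((⟨(p.1.1, w.1.2), hm1⟩ : vertexSet a a' b' b).1.1, r1.1.2) = (x, y) := by
    simp only
    rw [hpx, hr1y]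
  refine ⟨T2, by rw [← hfin]; exact hm2, Rel.trans K rel1 rel2, by rw [ex2, ex1],
    by rw [ey2, ey1], by rw [em2, em1], ?_⟩
  have : (⟨((⟨(p.1.1, w.1.2), hm1⟩ : vertexSet a a' b' b).1.1, r1.1.2), hm2⟩ :
      vertexSet a a' b' b) = ⟨(x, y), by rw [← hfin]; exact hm2⟩ := Subtype.ext hfin
  rw [← this]
  exact hmem2

theorem step_finish (hg : Good a a' b' b) {n : ℕ}
    (ih : ∀ M N : Multiset (vertexSet a a' b' b), M.card = n →
      Xs M = Xs N → Ys M = Ys N → Ms M = Ms N → Rel K M N)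
    {M N T2 : Multiset (vertexSet a a' b' b)} {v : vertexSet a a' b' b}
    (hv : v ∈ M) (hvT : v ∈ T2)
    (relN : Rel K N T2) (ex : Xs T2 = Xs N) (ey : Ys T2 = Ys N) (em : Ms T2 = Ms N)
    (hcard : M.card = n + 1) (hxX : Xs M = Xs N) (hyY : Ys M = Ys N) (hmM : Ms M = Ms N) :
    Rel K M N := by
  obtain ⟨M', hM⟩ : ∃ M', M = v ::ₘ M' := ⟨M.erase v, (Multiset.cons_erase hv).symm⟩
  obtain ⟨T', hT⟩ : ∃ T', T2 = v ::ₘ T' := ⟨T2.erase v, (Multiset.cons_erase hvT).symm⟩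
  have hx' : Xs M' = Xs T' := by
    have h : Xs M = Xs T2 := by rw [hxX, ← ex]
    rw [hM, hT] at h
    unfold Xs at h
    simp only [Multiset.map_cons] at h
    exact (Multiset.cons_inj_right _).mp h
  have hy' : Ys M' = Ys T' := by
    have h : Ys M = Ys T2 := by rw [hyY, ← ey]
    rw [hM, hT] at h
    unfold Ys at h
    simp only [Multiset.map_cons] at h
    exact (Multiset.cons_inj_right _).mp h
  have hm' : Ms M' = Ms T' := by
    have h : Ms M = Ms T2 := by rw [hmM, ← em]
    rw [hM, hT] at h
    unfold Ms at h
    simp only [Multiset.map_cons] at h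
    exact (Multiset.cons_inj_right _).mp h
  have hcard' : M'.card = n := by
    rw [hM] at hcard
    simp only [Multiset.card_cons] at hcard
    omega
  have h2 : Rel K M T2 := by
    rw [hM, hT]
    exact Rel.cons K v (ih M' T' hcard' hx' hy' hm')
  exact Rel.trans K h2 (Rel.symm K relN)

theorem rel_of_invariants (hg : Good a a' b' b) :
    ∀ (n : ℕ) (M N : Multiset (vertexSet a a' b' b)), M.card = n →
      Xs M = Xs N → Ys M = Ys N → Ms M = Ms N → Rel K M N := by
  intro n
  induction n with
  | zero =>
    intro M N hcard hxX hyY hmM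
    have hM : M = 0 := Multiset.card_eq_zero.mp hcard
    have hN : N = 0 := by
      have h0 : (Xs N).card = 0 := by rw [← hxX, hM]; rfl
      rw [Xs, Multiset.card_map] at h0
      exact Multiset.card_eq_zero.mp h0
    rw [hM, hN]
    exact Rel.refl K 0
  | succ n ih =>
    intro M N hcard hxX hyY hmM
    obtain ⟨g1,g2,g3,g4,g5,g6⟩ := hg
    have hgg : Good a a' b' b := ⟨g1,g2,g3,g4,g5,g6⟩
    by_cases hstrip : ∃ v ∈ M, ¬(muLabel a a' b' b v.1 = 1 ∨ muLabel a a' b' b v.1 = 2)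
    · -- a strip vertex exists in M
      obtain ⟨v, hv, hnc⟩ := hstrip
      have sp := mu_spec hgg v.2
      unfold MuSpec at sp
      -- the μ-carrier in N
      have hmuN : muLabel a a' b' b v.1 ∈ Ms N := by
        rw [← hmM]
        exact Multiset.mem_map_of_mem _ hv
      obtain ⟨q, hqN, hqmu⟩ := Multiset.mem_map.mp hmuN
      have sq := mu_spec hgg q.2
      unfold MuSpec at sq
      -- x- and y-carriers in N
      have hxc : v.1.1 ∈ Xs N := by rw [← hxX]; exact Multiset.mem_map_of_mem _ hv
      obtain ⟨p, hpN, hpx⟩ := Multiset.mem_map.mp hxc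
      have hyc : v.1.2 ∈ Ys N := by rw [← hyY]; exact Multiset.mem_map_of_mem _ hv
      obtain ⟨r, hrN, hry⟩ := Multiset.mem_map.mp hyc
      rcases sp with c|c|c|c|c|c|c|c
      · exact absurd (Or.inl c.2.2) hnc
      · exact absurd (Or.inl c.2.2) hnc
      · exact absurd (Or.inr c.2.2) hnc
      · exact absurd (Or.inr c.2.2) hnc
      · -- right strip
        have hq : b'.1 ≤ q.1.1 ∧ q.1.2 = v.1.2 := by omega
        have hside : (p.1.2 ≤ a'.2 ∧ q.1.2 ≤ a'.2) ∨ (b'.2 ≤ p.1.2 ∧ b'.2 ≤ q.1.2) ∨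
            (p.1.1 ≤ a'.1 ∧ q.1.1 ≤ a'.1) ∨ (b'.1 ≤ p.1.1 ∧ b'.1 ≤ q.1.1) :=
          Or.inr (Or.inr (Or.inr ⟨by omega, hq.1⟩))
        obtain ⟨T2, hm2, rel2, ex, ey, em, hmemT⟩ := reach_cross K hgg hpN hqN hside
        have he : (⟨(p.1.1, q.1.2), hm2⟩ : vertexSet a a' b' b) = v :=
          Subtype.ext (Prod.ext hpx hq.2)
        rw [he] at hmemT
        exact step_finish K hgg ih hv hmemT rel2 ex ey em hcard hxX hyY hmM
      · -- top strip
        have hq : q.1.1 = v.1.1 ∧ b'.2 ≤ q.1.2 := by omega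
        have hside : (q.1.2 ≤ a'.2 ∧ r.1.2 ≤ a'.2) ∨ (b'.2 ≤ q.1.2 ∧ b'.2 ≤ r.1.2) ∨
            (q.1.1 ≤ a'.1 ∧ r.1.1 ≤ a'.1) ∨ (b'.1 ≤ q.1.1 ∧ b'.1 ≤ r.1.1) :=
          Or.inr (Or.inl ⟨hq.2, by omega⟩)
        obtain ⟨T2, hm2, rel2, ex, ey, em, hmemT⟩ := reach_cross K hgg hqN hrN hside
        have he : (⟨(q.1.1, r.1.2), hm2⟩ : vertexSet a a' b' b) = v :=
          Subtype.ext (Prod.ext hq.1 hry)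
        rw [he] at hmemT
        exact step_finish K hgg ih hv hmemT rel2 ex ey em hcard hxX hyY hmM
      · -- left strip
        have hq : q.1.1 ≤ a'.1 ∧ q.1.2 = v.1.2 := by omega
        have hside : (p.1.2 ≤ a'.2 ∧ q.1.2 ≤ a'.2) ∨ (b'.2 ≤ p.1.2 ∧ b'.2 ≤ q.1.2) ∨
            (p.1.1 ≤ a'.1 ∧ q.1.1 ≤ a'.1) ∨ (b'.1 ≤ p.1.1 ∧ b'.1 ≤ q.1.1) :=
          Or.inr (Or.inr (Or.inl ⟨by omega, hq.1⟩))
        obtain ⟨T2, hm2, rel2, ex, ey, em, hmemT⟩ := reach_cross K hgg hpN hqN hside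
        have he : (⟨(p.1.1, q.1.2), hm2⟩ : vertexSet a a' b' b) = v :=
          Subtype.ext (Prod.ext hpx hq.2)
        rw [he] at hmemT
        exact step_finish K hgg ih hv hmemT rel2 ex ey em hcard hxX hyY hmM
      · -- bottom strip
        have hq : q.1.1 = v.1.1 ∧ q.1.2 ≤ a'.2 := by omega
        have hside : (q.1.2 ≤ a'.2 ∧ r.1.2 ≤ a'.2) ∨ (b'.2 ≤ q.1.2 ∧ b'.2 ≤ r.1.2) ∨
            (q.1.1 ≤ a'.1 ∧ r.1.1 ≤ a'.1) ∨ (b'.1 ≤ q.1.1 ∧ b'.1 ≤ r.1.1) :=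
          Or.inl ⟨hq.2, by omega⟩
        obtain ⟨T2, hm2, rel2, ex, ey, em, hmemT⟩ := reach_cross K hgg hqN hrN hside
        have he : (⟨(q.1.1, r.1.2), hm2⟩ : vertexSet a a' b' b) = v :=
          Subtype.ext (Prod.ext hq.1 hry)
        rw [he] at hmemT
        exact step_finish K hgg ih hv hmemT rel2 ex ey em hcard hxX hyY hmM
    · -- every vertex of M (hence of N) is a corner vertex
      push_neg at hstrip
      have hallN : ∀ u ∈ N, muLabel a a' b' b u.1 = 1 ∨ muLabel a a' b' b u.1 = 2 := by
        intro u hu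
        have h : muLabel a a' b' b u.1 ∈ Ms M := by
          rw [hmM]
          exact Multiset.mem_map_of_mem _ hu
        obtain ⟨v', hv', he⟩ := Multiset.mem_map.mp h
        rw [← he]
        exact hstrip v' hv'
      have hMne : M ≠ 0 := by
        intro h
        rw [h] at hcard
        simp at hcard
      obtain ⟨v, hv⟩ := Multiset.exists_mem_of_ne_zero hMne
      have sp := mu_spec hgg v.2
      unfold MuSpec at sp
      have hvc := hstrip v hv
      -- x- and y-carriers in N
      have hxc : v.1.1 ∈ Xs N := by rw [← hxX]; exact Multiset.mem_map_of_mem _ hv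
      obtain ⟨p, hpN, hpx⟩ := Multiset.mem_map.mp hxc
      have hyc : v.1.2 ∈ Ys N := by rw [← hyY]; exact Multiset.mem_map_of_mem _ hv
      obtain ⟨r, hrN, hry⟩ := Multiset.mem_map.mp hyc
      -- countP transfers
      have tL : (M.countP fun u => u.1.1 ≤ a'.1) = (N.countP fun u => u.1.1 ≤ a'.1) := by
        have e1 := countP_Xs (fun x0 => x0 ≤ a'.1) M
        have e2 := countP_Xs (fun x0 => x0 ≤ a'.1) N
        rw [hxX] at e1
        exact e1.symm.trans e2
      have tR : (M.countP fun u => b'.1 ≤ u.1.1) = (N.countP fun u => b'.1 ≤ u.1.1) := by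
        have e1 := countP_Xs (fun x0 => b'.1 ≤ x0) M
        have e2 := countP_Xs (fun x0 => b'.1 ≤ x0) N
        rw [hxX] at e1
        exact e1.symm.trans e2
      have tB : (M.countP fun u => u.1.2 ≤ a'.2) = (N.countP fun u => u.1.2 ≤ a'.2) := by
        have e1 := countP_Ys (fun x0 => x0 ≤ a'.2) M
        have e2 := countP_Ys (fun x0 => x0 ≤ a'.2) N
        rw [hyY] at e1
        exact e1.symm.trans e2
      have tT : (M.countP fun u => b'.2 ≤ u.1.2) = (N.countP fun u => b'.2 ≤ u.1.2) := by
        have e1 := countP_Ys (fun x0 => b'.2 ≤ x0) M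
        have e2 := countP_Ys (fun x0 => b'.2 ≤ x0) N
        rw [hyY] at e1
        exact e1.symm.trans e2
      have t1 : (M.countP fun u => muLabel a a' b' b u.1 = 1)
          = (N.countP fun u => muLabel a a' b' b u.1 = 1) := by
        have e1 := countP_Ms (fun z => z = 1) M
        have e2 := countP_Ms (fun z => z = 1) N
        rw [hmM] at e1
        exact e1.symm.trans e2
      have t2 : (M.countP fun u => muLabel a a' b' b u.1 = 2)
          = (N.countP fun u => muLabel a a' b' b u.1 = 2) := by
        have e1 := countP_Ms (fun z => z = 2) M
        have e2 := countP_Ms (fun z => z = 2) N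
        rw [hmM] at e1
        exact e1.symm.trans e2
      rcases sp with c|c|c|c|c|c|c|c
      · -- v is a lower-left corner vertex
        have e1 := ccLL hgg hstrip
        have e2 := ccLL hgg hallN
        have hpos : 0 < M.countP fun u => u.1.1 ≤ a'.1 ∧ u.1.2 ≤ a'.2 :=
          Multiset.countP_pos.mpr ⟨v, hv, ⟨c.1, c.2.1⟩⟩
        have hposN : 0 < N.countP fun u => u.1.1 ≤ a'.1 ∧ u.1.2 ≤ a'.2 := by omega
        obtain ⟨w, hwN, hw1, hw2⟩ := Multiset.countP_pos.mp hposN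
        obtain ⟨T2, hm2, rel2, ex, ey, em, hmemT⟩ := corner_reach K hgg
          ⟨p, hpN, hpx⟩ ⟨r, hrN, hry⟩
          ⟨w, hwN, Or.inl ⟨c.1, hw1⟩, Or.inl ⟨c.2.1, hw2⟩⟩
        have he : (⟨(v.1.1, v.1.2), hm2⟩ : vertexSet a a' b' b) = v := Subtype.ext rfl
        rw [he] at hmemT
        exact step_finish K hgg ih hv hmemT rel2 ex ey em hcard hxX hyY hmM
      · -- upper-right corner
        have e1 := ccUR hgg hstrip
        have e2 := ccUR hgg hallN
        have hpos : 0 < M.countP fun u => b'.1 ≤ u.1.1 ∧ b'.2 ≤ u.1.2 :=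
          Multiset.countP_pos.mpr ⟨v, hv, ⟨c.1, c.2.1⟩⟩
        have hposN : 0 < N.countP fun u => b'.1 ≤ u.1.1 ∧ b'.2 ≤ u.1.2 := by omega
        obtain ⟨w, hwN, hw1, hw2⟩ := Multiset.countP_pos.mp hposN
        obtain ⟨T2, hm2, rel2, ex, ey, em, hmemT⟩ := corner_reach K hgg
          ⟨p, hpN, hpx⟩ ⟨r, hrN, hry⟩
          ⟨w, hwN, Or.inr ⟨c.1, hw1⟩, Or.inr ⟨c.2.1, hw2⟩⟩
        have he : (⟨(v.1.1, v.1.2), hm2⟩ : vertexSet a a' b' b) = v := Subtype.ext rfl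
        rw [he] at hmemT
        exact step_finish K hgg ih hv hmemT rel2 ex ey em hcard hxX hyY hmM
      · -- upper-left corner
        have e1 := ccUL hgg hstrip
        have e2 := ccUL hgg hallN
        have hpos : 0 < M.countP fun u => u.1.1 ≤ a'.1 ∧ b'.2 ≤ u.1.2 :=
          Multiset.countP_pos.mpr ⟨v, hv, ⟨c.1, c.2.1⟩⟩
        have hposN : 0 < N.countP fun u => u.1.1 ≤ a'.1 ∧ b'.2 ≤ u.1.2 := by omega
        obtain ⟨w, hwN, hw1, hw2⟩ := Multiset.countP_pos.mp hposN
        obtain ⟨T2, hm2, rel2, ex, ey, em, hmemT⟩ := corner_reach K hgg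
          ⟨p, hpN, hpx⟩ ⟨r, hrN, hry⟩
          ⟨w, hwN, Or.inl ⟨c.1, hw1⟩, Or.inr ⟨c.2.1, hw2⟩⟩
        have he : (⟨(v.1.1, v.1.2), hm2⟩ : vertexSet a a' b' b) = v := Subtype.ext rfl
        rw [he] at hmemT
        exact step_finish K hgg ih hv hmemT rel2 ex ey em hcard hxX hyY hmM
      · -- lower-right corner
        have e1 := ccLR hgg hstrip
        have e2 := ccLR hgg hallN
        have hpos : 0 < M.countP fun u => b'.1 ≤ u.1.1 ∧ u.1.2 ≤ a'.2 :=
          Multiset.countP_pos.mpr ⟨v, hv, ⟨c.1, c.2.1⟩⟩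
        have hposN : 0 < N.countP fun u => b'.1 ≤ u.1.1 ∧ u.1.2 ≤ a'.2 := by omega
        obtain ⟨w, hwN, hw1, hw2⟩ := Multiset.countP_pos.mp hposN
        obtain ⟨T2, hm2, rel2, ex, ey, em, hmemT⟩ := corner_reach K hgg
          ⟨p, hpN, hpx⟩ ⟨r, hrN, hry⟩
          ⟨w, hwN, Or.inr ⟨c.1, hw1⟩, Or.inl ⟨c.2.1, hw2⟩⟩
        have he : (⟨(v.1.1, v.1.2), hm2⟩ : vertexSet a a' b' b) = v := Subtype.ext rfl
        rw [he] at hmemT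
        exact step_finish K hgg ih hv hmemT rel2 ex ey em hcard hxX hyY hmM
      all_goals
        exact absurd (hstrip v hv) (by omega)

/-- the exponent weight of a vertex under `φ` -/
noncomputable def wt (v : vertexSet a a' b' b) : (ℕ ⊕ ℕ ⊕ ℤ) →₀ ℕ :=
  Finsupp.single (Sum.inl v.1.1) 1 + Finsupp.single (Sum.inr (Sum.inl v.1.2)) 1 +
    Finsupp.single (Sum.inr (Sum.inr (muLabel a a' b' b v.1))) 1

/-- total weight of a multiset of vertices -/
noncomputable def Phi (M : Multiset (vertexSet a a' b' b)) : (ℕ ⊕ ℕ ⊕ ℤ) →₀ ℕ :=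
  (M.map wt).sum

theorem Phi_zero : Phi (0 : Multiset (vertexSet a a' b' b)) = 0 := rfl

theorem Phi_cons (v : vertexSet a a' b' b) (M : Multiset (vertexSet a a' b' b)) :
    Phi (v ::ₘ M) = wt v + Phi M := by
  simp [Phi]

theorem Phi_inl (M : Multiset (vertexSet a a' b' b)) (x : ℕ) :
    Phi M (Sum.inl x) = (Xs M).count x := by
  refine Multiset.induction_on M (by simp [Phi_zero, Xs]) fun v s ih => ?_
  rw [Phi_cons, Finsupp.add_apply, ih]
  have hxs : Xs (v ::ₘ s) = v.1.1 ::ₘ Xs s := by simp [Xs]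
  rw [hxs, Multiset.count_cons]
  have hwt : wt v (Sum.inl x) = if x = v.1.1 then 1 else 0 := by
    simp [wt, Finsupp.single_apply]
    split_ifs <;> omega
  omega

theorem Phi_ins (M : Multiset (vertexSet a a' b' b)) (y : ℕ) :
    Phi M (Sum.inr (Sum.inl y)) = (Ys M).count y := by
  refine Multiset.induction_on M (by simp [Phi_zero, Ys]) fun v s ih => ?_
  rw [Phi_cons, Finsupp.add_apply, ih]
  have hxs : Ys (v ::ₘ s) = v.1.2 ::ₘ Ys s := by simp [Ys]
  rw [hxs, Multiset.count_cons]
  have hwt : wt v (Sum.inr (Sum.inl y)) = if y = v.1.2 then 1 else 0 := by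
    simp [wt, Finsupp.single_apply]
    split_ifs <;> omega
  omega

theorem Phi_int (M : Multiset (vertexSet a a' b' b)) (z : ℤ) :
    Phi M (Sum.inr (Sum.inr z)) = (Ms M).count z := by
  refine Multiset.induction_on M (by simp [Phi_zero, Ms]) fun v s ih => ?_
  rw [Phi_cons, Finsupp.add_apply, ih]
  have hxs : Ms (v ::ₘ s) = muLabel a a' b' b v.1 ::ₘ Ms s := by simp [Ms]
  rw [hxs, Multiset.count_cons]
  have hwt : wt v (Sum.inr (Sum.inr z)) = if z = muLabel a a' b' b v.1 then 1 else 0 := by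
    simp [wt, Finsupp.single_apply]
    split_ifs <;> omega
  omega

theorem invariants_of_Phi_eq {M N : Multiset (vertexSet a a' b' b)} (h : Phi M = Phi N) :
    Xs M = Xs N ∧ Ys M = Ys N ∧ Ms M = Ms N := by
  refine ⟨Multiset.ext.mpr fun x => ?_, Multiset.ext.mpr fun y => ?_,
    Multiset.ext.mpr fun z => ?_⟩
  · rw [← Phi_inl, ← Phi_inl, h]
  · rw [← Phi_ins, ← Phi_ins, h]
  · rw [← Phi_int, ← Phi_int, h]

theorem X_eq_monomial (i : ℕ ⊕ ℕ ⊕ ℤ) :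
    (X i : MvPolynomial (ℕ ⊕ ℕ ⊕ ℤ) K) = monomial (Finsupp.single i 1) 1 := by
  rw [← X_pow_eq_monomial, pow_one]

theorem phi_X (v : vertexSet a a' b' b) :
    phiMap K a a' b' b (X v) = monomial (wt v) 1 := by
  rw [phiMap, aeval_X, wt, X_eq_monomial, X_eq_monomial, X_eq_monomial,
    monomial_mul, monomial_mul, one_mul, one_mul]

theorem phi_mon (M : Multiset (vertexSet a a' b' b)) :
    phiMap K a a' b' b (mon K M) = monomial (Phi M) 1 := by
  refine Multiset.induction_on M ?_ fun v s ih => ?_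
  · rw [mon_zero, map_one, Phi_zero]
    simp
  · rw [mon_cons, map_mul, phi_X, ih, Phi_cons, monomial_mul, one_mul]

theorem mon_toMultiset (u : (vertexSet a a' b' b) →₀ ℕ) :
    mon K u.toMultiset = monomial u 1 := by
  induction u using Finsupp.induction with
  | zero => simp [mon_zero]
  | single_add v n f hvf hn ih =>
    rw [Finsupp.toMultiset_add, Finsupp.toMultiset_single]
    have hmA : mon K (n • {v} + f.toMultiset) = mon K (n • {v}) * mon K f.toMultiset := by
      unfold mon
      rw [Multiset.map_add, Multiset.prod_add]
    rw [hmA, ih]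
    have hrep : mon K (n • ({v} : Multiset (vertexSet a a' b' b))) = X v ^ n := by
      unfold mon
      rw [Multiset.nsmul_singleton, Multiset.map_replicate, Multiset.prod_replicate]
    rw [hrep, X_pow_eq_monomial, monomial_mul, one_mul]

/-- exponent map of `φ` on monomial exponents -/
noncomputable def Aexp (u : (vertexSet a a' b' b) →₀ ℕ) : (ℕ ⊕ ℕ ⊕ ℤ) →₀ ℕ :=
  Phi u.toMultiset

theorem phi_monomial (u : (vertexSet a a' b' b) →₀ ℕ) (c : K) :
    phiMap K a a' b' b (monomial u c) = monomial (Aexp u) c := by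
  have h1 : (monomial u c : MvPolynomial (vertexSet a a' b' b) K) = C c * monomial u 1 := by
    rw [C_mul_monomial, mul_one]
  have h2 : phiMap K a a' b' b (C c) = C c := by
    rw [phiMap, aeval_C, algebraMap_eq]
  rw [h1, map_mul, h2, ← mon_toMultiset, phi_mon, ← Aexp, C_mul_monomial, mul_one]

theorem diff_mem (hg : Good a a' b' b) {u u' : (vertexSet a a' b' b) →₀ ℕ}
    (h : Aexp u = Aexp u') :
    (monomial u 1 - monomial u' 1 : MvPolynomial (vertexSet a a' b' b) K)
      ∈ polyominoIdeal K a a' b' b := by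
  obtain ⟨hx, hy, hm⟩ := invariants_of_Phi_eq h
  rw [← mon_toMultiset, ← mon_toMultiset]
  exact rel_of_invariants K hg u.toMultiset.card u.toMultiset u'.toMultiset rfl hx hy hm

theorem ker_sub (hg : Good a a' b' b) :
    ∀ (n : ℕ) (p : MvPolynomial (vertexSet a a' b' b) K), p.support.card ≤ n →
      phiMap K a a' b' b p = 0 → p ∈ polyominoIdeal K a a' b' b := by
  intro n
  induction n with
  | zero =>
    intro p hcard _
    have : p.support = ∅ := Finset.card_eq_zero.mp (Nat.le_zero.mp hcard)
    have hp : p = 0 := support_eq_empty.mp this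
    rw [hp]
    exact Ideal.zero_mem _
  | succ n ih =>
    intro p hcard hker
    by_cases hp : p = 0
    · rw [hp]; exact Ideal.zero_mem _
    obtain ⟨u, hu⟩ := support_nonempty.mpr hp
    -- expand φ p as a sum of monomials
    have hAsum : phiMap K a a' b' b p
        = ∑ w ∈ p.support, monomial (Aexp w) (coeff w p) := by
      conv_lhs => rw [p.as_sum]
      rw [map_sum]
      exact Finset.sum_congr rfl fun w _ => phi_monomial K w (coeff w p)
    have hsum : ∑ w ∈ p.support, (if Aexp w = Aexp u then coeff w p else 0) = 0 := by
      have h0 : coeff (Aexp u) (phiMap K a a' b' b p) = 0 := by rw [hker]; rfl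
      rw [hAsum, coeff_sum] at h0
      simp only [coeff_monomial] at h0
      exact h0
    have hex : ∃ w ∈ p.support, w ≠ u ∧ Aexp w = Aexp u := by
      by_contra hno
      push_neg at hno
      rw [Finset.sum_eq_single_of_mem u hu (fun w hw hwu => if_neg (hno w hw hwu))] at hsum
      rw [if_pos rfl] at hsum
      exact (mem_support_iff.mp hu) hsum
    obtain ⟨u', hu'supp, hu'ne, hu'A⟩ := hex
    set g : MvPolynomial (vertexSet a a' b' b) K := monomial u 1 - monomial u' 1 with hg_def
    have hgI : g ∈ polyominoIdeal K a a' b' b := diff_mem K hg hu'A.symm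
    have hgker : phiMap K a a' b' b g = 0 := by
      rw [hg_def, map_sub, phi_monomial, phi_monomial, hu'A, sub_self]
    set q : MvPolynomial (vertexSet a a' b' b) K := p - C (coeff u p) * g with hq_def
    have hqker : phiMap K a a' b' b q = 0 := by
      rw [hq_def, map_sub, map_mul, hgker, mul_zero, sub_zero, hker]
    have hcoeffg : ∀ w, coeff w g = (if u = w then (1:K) else 0) - (if u' = w then 1 else 0) := by
      intro w
      rw [hg_def, coeff_sub, coeff_monomial, coeff_monomial]
    have hsupp : q.support ⊆ p.support.erase u := by
      intro w hw
      rw [Finset.mem_erase]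
      have hcw : coeff w q = coeff w p - coeff u p * coeff w g := by
        rw [hq_def, coeff_sub, coeff_C_mul]
      constructor
      · intro hwu
        subst hwu
        rw [hcoeffg, if_pos rfl, if_neg hu'ne] at hcw
        rw [mem_support_iff] at hw
        apply hw
        rw [hcw]
        ring
      · by_contra hns
        have hcwp : coeff w p = 0 := notMem_support_iff.mp hns
        have hwu : u ≠ w := fun h => hns (h ▸ hu)
        have hwu' : u' ≠ w := fun h => hns (h ▸ hu'supp)
        rw [mem_support_iff] at hw
        apply hw
        rw [hcw, hcoeffg, if_neg hwu, if_neg hwu', hcwp]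
        ring
    have hqcard : q.support.card ≤ n := by
      have h1 := Finset.card_le_card hsupp
      rw [Finset.card_erase_of_mem hu] at h1
      omega
    have hqI := ih q hqcard hqker
    have hpq : p = q + C (coeff u p) * g := by rw [hq_def]; ring
    rw [hpq]
    exact Ideal.add_mem _ hqI (Ideal.mul_mem_left _ _ hgI)

theorem ideal_sub_ker (hg : Good a a' b' b) :
    polyominoIdeal K a a' b' b ≤ RingHom.ker (phiMap K a a' b' b) := by
  rw [polyominoIdeal, Ideal.span_le]
  rintro f ⟨c, d, c', d', hin, hc', hd', rfl⟩
  rw [SetLike.mem_coe, RingHom.mem_ker]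
  obtain ⟨s1, s2, s3, s4, s5, s6, hav⟩ := innerInterval_struct hg hin
  have hc'm : (c.1.1, d.1.2) ∈ vertexSet a a' b' b := by rw [← hc']; exact c'.2
  have hd'm : (d.1.1, c.1.2) ∈ vertexSet a a' b' b := by rw [← hd']; exact d'.2
  have hmu : (muLabel a a' b' b (c.1.1, d.1.2) = muLabel a a' b' b d.1 ∧
      muLabel a a' b' b (d.1.1, c.1.2) = muLabel a a' b' b c.1) ∨
      (muLabel a a' b' b (c.1.1, d.1.2) = muLabel a a' b' b c.1 ∧
       muLabel a a' b' b (d.1.1, c.1.2) = muLabel a a' b' b d.1) := by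
    rcases hav with h|h|h|h
    · exact Or.inl
        ⟨mu_left (x1 := c.1.1) (x2 := d.1.1) (y := d.1.2) hg hc'm d.2 (by omega) (by omega),
         mu_left (x1 := d.1.1) (x2 := c.1.1) (y := c.1.2) hg hd'm c.2 (by omega) (by omega)⟩
    · exact Or.inl
        ⟨mu_right (x1 := c.1.1) (x2 := d.1.1) (y := d.1.2) hg hc'm d.2 (by omega) (by omega),
         mu_right (x1 := d.1.1) (x2 := c.1.1) (y := c.1.2) hg hd'm c.2 (by omega) (by omega)⟩
    · exact Or.inr
        ⟨mu_bottom (x := c.1.1) (y1 := d.1.2) (y2 := c.1.2) hg hc'm c.2 (by omega) (by omega),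
         mu_bottom (x := d.1.1) (y1 := c.1.2) (y2 := d.1.2) hg hd'm d.2 (by omega) (by omega)⟩
    · exact Or.inr
        ⟨mu_top (x := c.1.1) (y1 := d.1.2) (y2 := c.1.2) hg hc'm c.2 (by omega) (by omega),
         mu_top (x := d.1.1) (y1 := c.1.2) (y2 := d.1.2) hg hd'm d.2 (by omega) (by omega)⟩
  simp only [map_sub, map_mul, phiMap, aeval_X]
  rw [hc', hd']
  dsimp only
  rcases hmu with ⟨f1, f2⟩ | ⟨f1, f2⟩ <;> rw [f1, f2] <;> ring

end Reach
end Stmt5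

/-- main theorem: for `P = P_{(a,b)} \ P_{(a',b')}` with `a < a' < b' < b`,
the polyomino ideal `I_P` equals the toric ideal `J_P = ker φ`; in particular `I_P` is
prime and `K[P] = S/I_P` is isomorphic to the toric ring
`K[r_{v₁}s_{v₂}t_{μ(v)} : v ∈ V(P)]`, i.e. the image of `φ`. -/
theorem stmt5 {K : Type*} [Field K] (a a' b' b : ℕ × ℕ)
    (h1 : strictLt a a') (h2 : strictLt a' b') (h3 : strictLt b' b) :
    polyominoIdeal K a a' b' b = RingHom.ker (phiMap K a a' b' b) ∧
      (polyominoIdeal K a a' b' b).IsPrime ∧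
      Nonempty ((MvPolynomial (vertexSet a a' b' b) K ⧸ polyominoIdeal K a a' b' b)
        ≃ₐ[K] (phiMap K a a' b' b).range) := by
  have hgg := Stmt5.good_of h1 h2 h3
  have hle1 := Stmt5.ideal_sub_ker K hgg
  have hle2 : RingHom.ker (phiMap K a a' b' b) ≤ polyominoIdeal K a a' b' b := fun p hp =>
    Stmt5.ker_sub K hgg p.support.card p le_rfl (RingHom.mem_ker.mp hp)
  have heq : polyominoIdeal K a a' b' b = RingHom.ker (phiMap K a a' b' b) :=
    le_antisymm hle1 hle2
  refine ⟨heq, ?_, ?_⟩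
  · rw [heq]
    exact RingHom.ker_isPrime _
  · refine ⟨?_⟩
    have e1 : (MvPolynomial (vertexSet a a' b' b) K ⧸ polyominoIdeal K a a' b' b)
        ≃ₐ[K] (MvPolynomial (vertexSet a a' b' b) K
          ⧸ RingHom.ker (phiMap K a a' b' b).rangeRestrict) :=
      Ideal.quotientEquivAlgOfEq K (by rw [heq, AlgHom.ker_rangeRestrict])
    exact e1.trans (Ideal.quotientKerAlgEquivOfSurjective
      (AlgHom.rangeRestrict_surjective _))
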